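/- If T is a quasitriangular bounded linear operator on a complex Hilbert space H, then j_T(λ) ≤ j_{T*}(λ̄) for every λ ∈ ℂ, where T* is the adjoint of T. -/

import Mathlib

open Filter ContinuousLinearMap

/-- The injectivity radius `j_T(z) = inf {‖(T - z)h‖ : ‖h‖ = 1}`. -/
noncomputable def injRad {H : Type*} [NormedAddCommGroup H] [InnerProductSpace ℂ H]
    (T : H →L[ℂ] H) (z : ℂ) : ℝ :=
  sInf {r : ℝ | ∃ h : H, ‖h‖ = 1 ∧ r = ‖T h - z • h‖}

/-- A filtration: an increasing sequence of finite-rank orthogonal projections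
whose ranges have dense union. -/
structure Filtration (H : Type*) [NormedAddCommGroup H] [InnerProductSpace ℂ H]
    [CompleteSpace H] where
  P : ℕ → H →L[ℂ] H
  idem : ∀ n, (P n) ∘L (P n) = P n
  selfadj : ∀ n, IsSelfAdjoint (P n)
  finiteRank : ∀ n, FiniteDimensional ℂ (LinearMap.range (P n : H →ₗ[ℂ] H))
  mono : ∀ n, LinearMap.range (P n : H →ₗ[ℂ] H) ≤ LinearMap.range (P (n + 1) : H →ₗ[ℂ] H)
  dense : Dense (⋃ n, (LinearMap.range (P n : H →ₗ[ℂ] H) : Set H))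

/-- `T` is quasitriangular if `‖(I - Pₙ) T Pₙ‖ → 0` for some filtration `{Pₙ}`. -/
def IsQuasitriangular {H : Type*} [NormedAddCommGroup H] [InnerProductSpace ℂ H]
    [CompleteSpace H] (T : H →L[ℂ] H) : Prop :=
  ∃ F : Filtration H,
    Tendsto (fun n => ‖((1 : H →L[ℂ] H) - F.P n) ∘L T ∘L F.P n‖) atTop (nhds 0)

section Helpers

local notation "⟪" x ", " y "⟫" => @inner ℂ _ _ x y

private lemma proj_norm_le {H : Type*} [NormedAddCommGroup H] [InnerProductSpace ℂ H]
    [CompleteSpace H]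
    (P : H →L[ℂ] H) (hidem : P ∘L P = P) (hsa : IsSelfAdjoint P) (x : H) : ‖P x‖ ≤ ‖x‖ := by
  have hsym := (ContinuousLinearMap.isSelfAdjoint_iff_isSymmetric.mp hsa)
  have hPP : P (P x) = P x := by
    conv_rhs => rw [← hidem]
    rfl
  have h1 : ⟪P x, P x⟫ = ⟪x, P x⟫ := by simpa [hPP] using hsym x (P x)
  have h2 : ((‖P x‖ : ℂ)) ^ 2 = ⟪x, P x⟫ := by
    rw [← h1, inner_self_eq_norm_sq_to_K]
    norm_cast
  have h3 : ‖P x‖ ^ 2 ≤ ‖x‖ * ‖P x‖ := by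
    have hn := norm_inner_le_norm (𝕜 := ℂ) x (P x)
    calc ‖P x‖ ^ 2 = ‖((‖P x‖ : ℂ)) ^ 2‖ := by
          rw [norm_pow]; simp
      _ = ‖⟪x, P x⟫‖ := by rw [h2]
      _ ≤ ‖x‖ * ‖P x‖ := hn
  nlinarith [norm_nonneg (P x), norm_nonneg x]

private lemma findim_inf_le {V : Type*} [NormedAddCommGroup V] [InnerProductSpace ℂ V]
    [FiniteDimensional ℂ V] (A : V →L[ℂ] V) (w : V) (hw : ‖w‖ = 1) :
    sInf {r : ℝ | ∃ v : V, ‖v‖ = 1 ∧ r = ‖A v‖} ≤ ‖ContinuousLinearMap.adjoint A w‖ := by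
  set s := {r : ℝ | ∃ v : V, ‖v‖ = 1 ∧ r = ‖A v‖} with hs
  have hne : s.Nonempty := ⟨‖A w‖, w, hw, rfl⟩
  have hbdd : BddBelow s := ⟨0, by rintro r ⟨v, hv, rfl⟩; positivity⟩
  by_contra hcon
  push_neg at hcon
  set c := sInf s with hc
  have hcpos : 0 < c := lt_of_le_of_lt (norm_nonneg _) hcon
  have hlow : ∀ v : V, c * ‖v‖ ≤ ‖A v‖ := by
    intro v
    rcases eq_or_ne v 0 with rfl | hv0
    · simp
    · have hvpos : 0 < ‖v‖ := norm_pos_iff.mpr hv0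
      have hunit : ‖((‖v‖ : ℂ)⁻¹ • v)‖ = 1 := by
        rw [norm_smul]; simp [hvpos.ne']
      have hle := csInf_le hbdd ⟨(‖v‖ : ℂ)⁻¹ • v, hunit, rfl⟩
      rw [map_smul, norm_smul] at hle
      simp only [norm_inv, Complex.norm_real, norm_norm] at hle
      calc c * ‖v‖ ≤ (‖v‖⁻¹ * ‖A v‖) * ‖v‖ := by nlinarith
        _ = ‖A v‖ := by field_simp
  have hinj : Function.Injective A := by
    intro x y hxy
    have h0 := hlow (x - y)
    rw [map_sub, hxy, sub_self, norm_zero] at h0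
    have h1 : ‖x - y‖ ≤ 0 := by nlinarith [norm_nonneg (x - y)]
    have h2 := le_antisymm h1 (norm_nonneg _)
    rwa [norm_eq_zero, sub_eq_zero] at h2
  have hsurj : Function.Surjective A :=
    (LinearMap.injective_iff_surjective (f := (A : V →ₗ[ℂ] V))).mp hinj
  let e : V ≃ₗ[ℂ] V := LinearEquiv.ofBijective (A : V →ₗ[ℂ] V) ⟨hinj, hsurj⟩
  let E : V ≃L[ℂ] V := e.toContinuousLinearEquiv
  have hAE : ∀ x, A (E.symm x) = x := fun x => E.apply_symm_apply x
  have hAD : A ∘L (E.symm : V →L[ℂ] V) = 1 := by ext x; exact hAE x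
  have hadj : (ContinuousLinearMap.adjoint ((E.symm : V →L[ℂ] V))) ∘L
      ContinuousLinearMap.adjoint A = 1 := by
    rw [← adjoint_comp, hAD]
    simp [ContinuousLinearMap.one_def, adjoint_id]
  have hw' : w = (ContinuousLinearMap.adjoint ((E.symm : V →L[ℂ] V)))
      (ContinuousLinearMap.adjoint A w) := by
    have := congrArg (fun f => f w) hadj
    simpa using this.symm
  have hDop : ‖((E.symm : V →L[ℂ] V))‖ ≤ c⁻¹ := by
    apply ContinuousLinearMap.opNorm_le_bound _ (by positivity)
    intro x
    have h := hlow (E.symm x)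
    rw [hAE x] at h
    simp only [ContinuousLinearEquiv.coe_coe]
    calc ‖E.symm x‖ = c⁻¹ * (c * ‖E.symm x‖) := by field_simp
      _ ≤ c⁻¹ * ‖x‖ := mul_le_mul_of_nonneg_left h (by positivity)
  have hadjnorm : ‖ContinuousLinearMap.adjoint ((E.symm : V →L[ℂ] V))‖ ≤ c⁻¹ := by
    rw [LinearIsometryEquiv.norm_map ContinuousLinearMap.adjoint]
    exact hDop
  have hfin : (1:ℝ) ≤ c⁻¹ * ‖ContinuousLinearMap.adjoint A w‖ := by
    calc (1:ℝ) = ‖w‖ := hw.symm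
      _ = ‖(ContinuousLinearMap.adjoint ((E.symm : V →L[ℂ] V)))
            (ContinuousLinearMap.adjoint A w)‖ := by rw [← hw']
      _ ≤ ‖ContinuousLinearMap.adjoint ((E.symm : V →L[ℂ] V))‖ *
            ‖ContinuousLinearMap.adjoint A w‖ := le_opNorm _ _
      _ ≤ c⁻¹ * ‖ContinuousLinearMap.adjoint A w‖ :=
          mul_le_mul_of_nonneg_right hadjnorm (norm_nonneg _)
  have h9 : c * 1 ≤ c * (c⁻¹ * ‖ContinuousLinearMap.adjoint A w‖) :=
    mul_le_mul_of_nonneg_left hfin hcpos.le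
  rw [mul_one, ← mul_assoc, mul_inv_cancel₀ hcpos.ne', one_mul] at h9
  linarith

end Helpers

section MainProof

local notation "⟪" x ", " y "⟫" => @inner ℂ _ _ x y

set_option maxHeartbeats 2000000 in
theorem quasitriangular_injRad_le {H : Type*} [NormedAddCommGroup H] [InnerProductSpace ℂ H] [CompleteSpace H]
    (T : H →L[ℂ] H) (hT : IsQuasitriangular T) (lam : ℂ) :
    injRad T lam ≤ injRad (ContinuousLinearMap.adjoint T) ((starRingEnd ℂ) lam) := by
  obtain ⟨F, htend⟩ := hT
  set S : H →L[ℂ] H := T - lam • 1 with hSdef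
  have hSapp : ∀ h : H, S h = T h - lam • h := by
    intro h; simp [hSdef]
  have hadjS : ContinuousLinearMap.adjoint S
      = ContinuousLinearMap.adjoint T - ((starRingEnd ℂ) lam) • 1 := by
    rw [← ContinuousLinearMap.star_eq_adjoint, ← ContinuousLinearMap.star_eq_adjoint, hSdef]
    simp [star_sub, star_smul, Complex.star_def]
  have hadjSapp : ∀ h : H, (ContinuousLinearMap.adjoint S) h
      = (ContinuousLinearMap.adjoint T) h - ((starRingEnd ℂ) lam) • h := by
    intro h; rw [hadjS]; simp
  -- rewrite the two injRad sets
  have hset1 : {r : ℝ | ∃ h : H, ‖h‖ = 1 ∧ r = ‖T h - lam • h‖}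
      = {r : ℝ | ∃ h : H, ‖h‖ = 1 ∧ r = ‖S h‖} := by
    ext r
    constructor <;> rintro ⟨h, h1, rfl⟩ <;> exact ⟨h, h1, by rw [hSapp]⟩
  have hset2 : {r : ℝ | ∃ h : H, ‖h‖ = 1 ∧ r
        = ‖(ContinuousLinearMap.adjoint T) h - ((starRingEnd ℂ) lam) • h‖}
      = {r : ℝ | ∃ h : H, ‖h‖ = 1 ∧ r = ‖(ContinuousLinearMap.adjoint S) h‖} := by
    ext r
    constructor <;> rintro ⟨h, h1, rfl⟩ <;> exact ⟨h, h1, by rw [hadjSapp]⟩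
  rw [injRad, injRad, hset1, hset2]
  -- trivial case: no unit vector
  by_cases hH : ∃ g : H, ‖g‖ = 1
  swap
  · have he1 : {r : ℝ | ∃ h : H, ‖h‖ = 1 ∧ r = ‖S h‖} = ∅ := by
      ext r
      simp only [Set.mem_setOf_eq, Set.mem_empty_iff_false, iff_false, not_exists]
      intro h hh
      exact absurd ⟨h, hh.1⟩ hH
    have he2 : {r : ℝ | ∃ h : H, ‖h‖ = 1 ∧ r = ‖(ContinuousLinearMap.adjoint S) h‖} = ∅ := by
      ext r
      simp only [Set.mem_setOf_eq, Set.mem_empty_iff_false, iff_false, not_exists]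
      intro h hh
      exact absurd ⟨h, hh.1⟩ hH
    rw [he1, he2]
  -- main case
  set s1 := {r : ℝ | ∃ h : H, ‖h‖ = 1 ∧ r = ‖S h‖} with hs1
  set s2 := {r : ℝ | ∃ h : H, ‖h‖ = 1 ∧ r = ‖(ContinuousLinearMap.adjoint S) h‖} with hs2
  obtain ⟨g0, hg0⟩ := hH
  have hne1 : s1.Nonempty := ⟨‖S g0‖, g0, hg0, rfl⟩
  have hne2 : s2.Nonempty := ⟨‖(ContinuousLinearMap.adjoint S) g0‖, g0, hg0, rfl⟩
  have hbdd1 : BddBelow s1 := ⟨0, by rintro r ⟨v, hv, rfl⟩; positivity⟩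
  have hbdd2 : BddBelow s2 := ⟨0, by rintro r ⟨v, hv, rfl⟩; positivity⟩
  set a := sInf s1 with ha
  set b := sInf s2 with hb
  set M := ‖ContinuousLinearMap.adjoint S‖ with hM
  have hM0 : 0 ≤ M := norm_nonneg _
  -- quasitriangularity transfers to S
  have htendS : Tendsto (fun n => ‖((1 : H →L[ℂ] H) - F.P n) ∘L S ∘L F.P n‖) atTop (nhds 0) := by
    have hcomp : ∀ n, ((1 : H →L[ℂ] H) - F.P n) ∘L S ∘L F.P n
        = ((1 : H →L[ℂ] H) - F.P n) ∘L T ∘L F.P n := by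
      intro n
      ext x
      have hPP : F.P n (F.P n x) = F.P n x := DFunLike.congr_fun (F.idem n) x
      simp [hSdef, ContinuousLinearMap.comp_apply, ContinuousLinearMap.sub_apply,
        ContinuousLinearMap.one_apply, ContinuousLinearMap.smul_apply, map_sub, map_smul, hPP]
    simpa only [hcomp] using htend
  -- fixed points of projections
  have hfix : ∀ n, ∀ w ∈ LinearMap.range (F.P n : H →ₗ[ℂ] H), F.P n w = w := by
    intro n w hw
    obtain ⟨z, rfl⟩ := hw
    exact DFunLike.congr_fun (F.idem n) z
  have hmono : Monotone (fun n => LinearMap.range (F.P n : H →ₗ[ℂ] H)) := monotone_nat_of_le_succ F.mono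
  -- key inequality for each small δ
  have key : ∀ δ : ℝ, 0 < δ → δ < 1/2 → a ≤ (b + δ + M * δ) / (1 - δ) + 2 * δ := by
    intro δ hδ hδ2
    -- pick a near-minimizer g for adjoint S
    obtain ⟨r, ⟨g, hg1, rfl⟩, hrlt⟩ :=
      exists_lt_of_csInf_lt hne2 (show b < b + δ by linarith)
    -- pick n with small corner and P n g close to g
    obtain ⟨N1, hN1⟩ := eventually_atTop.mp
      (htendS.eventually (gt_mem_nhds hδ))
    obtain ⟨y, hy, hdy⟩ := F.dense.exists_dist_lt g (half_pos hδ)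
    obtain ⟨m, hym⟩ := Set.mem_iUnion.mp hy
    set n := max N1 m with hn
    have hn1 : ‖((1 : H →L[ℂ] H) - F.P n) ∘L S ∘L F.P n‖ < δ := hN1 n (le_max_left _ _)
    have hyn : y ∈ LinearMap.range (F.P n : H →ₗ[ℂ] H) := hmono (le_max_right N1 m) hym
    have hPy : F.P n y = y := hfix n y hyn
    have hgy : ‖g - y‖ < δ/2 := by rwa [← dist_eq_norm]
    have hPg : ‖F.P n g - g‖ < δ := by
      have hdecomp : F.P n g - g = F.P n (g - y) + (y - g) := by
        rw [map_sub, hPy]; abel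
      calc ‖F.P n g - g‖ = ‖F.P n (g - y) + (y - g)‖ := by rw [hdecomp]
        _ ≤ ‖F.P n (g - y)‖ + ‖y - g‖ := norm_add_le _ _
        _ ≤ ‖g - y‖ + ‖y - g‖ := by
            have := proj_norm_le (F.P n) (F.idem n) (F.selfadj n) (g - y)
            linarith
        _ < δ := by rw [norm_sub_rev y g]; linarith
    set u := F.P n g with hu
    have humem : u ∈ LinearMap.range (F.P n : H →ₗ[ℂ] H) := ⟨g, rfl⟩
    have hulb : 1 - δ ≤ ‖u‖ := by
      have h1 := abs_norm_sub_norm_le u g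
      have h2 : |‖u‖ - ‖g‖| < δ := lt_of_le_of_lt h1 hPg
      rw [abs_lt] at h2
      linarith [hg1 ▸ h2.1]
    have hupos : 0 < ‖u‖ := by linarith
    -- the finite-dimensional compression
    set V := LinearMap.range (F.P n : H →ₗ[ℂ] H) with hV
    haveI : FiniteDimensional ℂ V := F.finiteRank n
    set A : V →L[ℂ] V := LinearMap.toContinuousLinearMap
      (LinearMap.codRestrict V (((F.P n ∘L S) : H →L[ℂ] H).toLinearMap.comp V.subtype)
        (fun v => ⟨S v, rfl⟩)) with hA
    set B : V →L[ℂ] V := LinearMap.toContinuousLinearMap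
      (LinearMap.codRestrict V
        (((F.P n ∘L ContinuousLinearMap.adjoint S) : H →L[ℂ] H).toLinearMap.comp V.subtype)
        (fun v => ⟨ContinuousLinearMap.adjoint S v, rfl⟩)) with hB
    have hAco : ∀ v : V, ((A v : H)) = F.P n (S (v : H)) := fun v => rfl
    have hBco : ∀ v : V, ((B v : H)) = F.P n (ContinuousLinearMap.adjoint S (v : H)) :=
      fun v => rfl
    have hsymn := (ContinuousLinearMap.isSelfAdjoint_iff_isSymmetric.mp (F.selfadj n))
    have hBA : B = ContinuousLinearMap.adjoint A := by
      rw [ContinuousLinearMap.eq_adjoint_iff]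
      intro x y
      rw [Submodule.coe_inner, Submodule.coe_inner, hBco, hAco]
      calc ⟪F.P n (ContinuousLinearMap.adjoint S (x : H)), (y : H)⟫
          = ⟪ContinuousLinearMap.adjoint S (x : H), F.P n (y : H)⟫ := hsymn _ _
        _ = ⟪ContinuousLinearMap.adjoint S (x : H), (y : H)⟫ := by rw [hfix n _ y.2]
        _ = ⟪(x : H), S (y : H)⟫ := ContinuousLinearMap.adjoint_inner_left S _ _
        _ = ⟪F.P n (x : H), S (y : H)⟫ := by rw [hfix n _ x.2]
        _ = ⟪(x : H), F.P n (S (y : H))⟫ := hsymn _ _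
    -- the normalized vector in V
    set uV : V := ⟨u, humem⟩ with huV
    set gh : V := ((‖u‖ : ℂ))⁻¹ • uV with hgh
    have hghnorm : ‖gh‖ = 1 := by
      rw [hgh, norm_smul]
      have : ‖uV‖ = ‖u‖ := rfl
      rw [this]
      simp [hupos.ne']
    -- apply the finite-dimensional lemma
    have hfd := findim_inf_le A gh hghnorm
    -- bound ‖adjoint A gh‖
    have hadjbound : ‖ContinuousLinearMap.adjoint A gh‖ ≤ (b + δ + M * δ) / (1 - δ) := by
      rw [← hBA]
      have hBgh : ‖B gh‖ = ‖u‖⁻¹ * ‖F.P n (ContinuousLinearMap.adjoint S u)‖ := by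
        rw [hgh, map_smul, norm_smul]
        have h1 : ‖B uV‖ = ‖F.P n (ContinuousLinearMap.adjoint S u)‖ := by
          rw [show ‖B uV‖ = ‖((B uV : H))‖ from rfl, hBco]
        rw [h1]
        simp
      rw [hBgh]
      have hnum : ‖F.P n (ContinuousLinearMap.adjoint S u)‖ ≤ b + δ + M * δ := by
        have hp := proj_norm_le (F.P n) (F.idem n) (F.selfadj n)
          (ContinuousLinearMap.adjoint S u)
        have hSu : ‖ContinuousLinearMap.adjoint S u‖
            ≤ ‖ContinuousLinearMap.adjoint S g‖ + M * ‖u - g‖ := by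
          calc ‖ContinuousLinearMap.adjoint S u‖
              = ‖ContinuousLinearMap.adjoint S g + ContinuousLinearMap.adjoint S (u - g)‖ := by
                rw [← map_add, show g + (u - g) = u from by abel]
            _ ≤ ‖ContinuousLinearMap.adjoint S g‖ + ‖ContinuousLinearMap.adjoint S (u - g)‖ :=
                norm_add_le _ _
            _ ≤ ‖ContinuousLinearMap.adjoint S g‖ + M * ‖u - g‖ := by
                have := (ContinuousLinearMap.adjoint S).le_opNorm (u - g)
                linarith
        have hMug : M * ‖u - g‖ ≤ M * δ := mul_le_mul_of_nonneg_left hPg.le hM0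
        linarith
      rw [inv_mul_eq_div]
      apply div_le_div₀ (by linarith [norm_nonneg (F.P n (ContinuousLinearMap.adjoint S u))])
        hnum (by linarith) hulb
    -- get a near-minimizer for A
    have hAne : {r : ℝ | ∃ v : V, ‖v‖ = 1 ∧ r = ‖A v‖}.Nonempty := ⟨‖A gh‖, gh, hghnorm, rfl⟩
    obtain ⟨r, ⟨v, hv1, rfl⟩, hvlt⟩ := exists_lt_of_csInf_lt hAne
      (lt_of_le_of_lt hfd (lt_add_of_pos_right _ hδ))
    -- transfer back to H
    have hvH : ‖(v : H)‖ = 1 := hv1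
    have hPv : F.P n (v : H) = (v : H) := hfix n _ v.2
    have hSv : ‖S (v : H)‖ ≤ ‖A v‖ + δ := by
      have hdecomp : S (v : H) = F.P n (S (v : H))
          + (((1 : H →L[ℂ] H) - F.P n) ∘L S ∘L F.P n) (v : H) := by
        simp [ContinuousLinearMap.comp_apply, ContinuousLinearMap.sub_apply,
          ContinuousLinearMap.one_apply, hPv]
      have hcornerv : ‖(((1 : H →L[ℂ] H) - F.P n) ∘L S ∘L F.P n) (v : H)‖ ≤ δ := by
        calc ‖(((1 : H →L[ℂ] H) - F.P n) ∘L S ∘L F.P n) (v : H)‖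
            ≤ ‖((1 : H →L[ℂ] H) - F.P n) ∘L S ∘L F.P n‖ * ‖(v : H)‖ := le_opNorm _ _
          _ ≤ δ := by rw [hvH, mul_one]; exact hn1.le
      have hAv : ‖A v‖ = ‖F.P n (S (v : H))‖ := by
        rw [show ‖A v‖ = ‖((A v : H))‖ from rfl, hAco]
      calc ‖S (v : H)‖ = ‖F.P n (S (v : H))
            + (((1 : H →L[ℂ] H) - F.P n) ∘L S ∘L F.P n) (v : H)‖ := by rw [← hdecomp]
        _ ≤ ‖F.P n (S (v : H))‖
            + ‖(((1 : H →L[ℂ] H) - F.P n) ∘L S ∘L F.P n) (v : H)‖ := norm_add_le _ _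
        _ ≤ ‖A v‖ + δ := by rw [hAv]; linarith
    have hamem : a ≤ ‖S (v : H)‖ := csInf_le hbdd1 ⟨(v : H), hvH, rfl⟩
    have hrb : ‖ContinuousLinearMap.adjoint S g‖ < b + δ := hrlt
    linarith
  -- take the limit δ → 0 along δ_k = 1/(k+3)
  have hδk : Tendsto (fun k : ℕ => 1 / ((k : ℝ) + 3)) atTop (nhds 0) := by
    simpa only [one_div, Pi.inv_def] using
      (tendsto_atTop_add_const_right atTop 3 tendsto_natCast_atTop_atTop).inv_tendsto_atTop
  have hcont : ContinuousAt (fun d : ℝ => (b + d + M * d) / (1 - d) + 2 * d) 0 := by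
    apply ContinuousAt.add
    · apply ContinuousAt.div (by fun_prop) (by fun_prop)
      norm_num
    · fun_prop
  have hlim : Tendsto (fun k : ℕ => (b + 1/((k:ℝ)+3) + M * (1/((k:ℝ)+3))) / (1 - 1/((k:ℝ)+3))
      + 2 * (1/((k:ℝ)+3))) atTop (nhds b) := by
    have := hcont.tendsto.comp hδk
    simp only [Function.comp_def] at this
    convert this using 2
    norm_num
  apply ge_of_tendsto' hlim
  intro k
  have hk1 : (0:ℝ) < 1 / ((k:ℝ) + 3) := by positivity
  have hk2 : 1 / ((k:ℝ) + 3) < 1/2 := by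
    rw [div_lt_div_iff₀ (by positivity) (by norm_num)]
    linarith [Nat.cast_nonneg (α := ℝ) k]
  exact key _ hk1 hk2

end MainProof
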